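/- For m ≥ 1 and n ≥ 3, the number of Type I(a) tandem occurrences in the Fibonacci array f_{m,n}, i.e. the number of tuples (i,j,r,l) with r,l ≥ 1, i+r ≤ F(m), j+2l ≤ F(n) such that f_{m,n}[(i,j);(r,l)] = f_{m,n}[(i,j+l);(r,l)], equals R(n) · F(m)(F(m)+1)/2, where R(n) is the number of square occurrences in the 1D Fibonacci word f_n. -/

import Mathlib

/-- Fibonacci numbers: F(0)=1, F(1)=1, F(n+2)=F(n+1)+F(n). -/
def F : ℕ → ℕ
  | 0 => 1
  | 1 => 1
  | n + 2 => F (n + 1) + F n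

/-- Finite Fibonacci words over {a,b} coded as Fin 2 (a=0, b=1). -/
def fibWord : ℕ → List (Fin 2)
  | 0 => [0]
  | 1 => [1]
  | n + 2 => fibWord (n + 1) ++ fibWord n

/-- The Fibonacci arrays f_{m,n} over {a,b,c,d} coded as Fin 2 × Fin 2,
with a=(0,0), b=(0,1), c=(1,0), d=(1,1); `fibArr m n i j` is the (i,j) entry
(0-indexed, only indices i < F m, j < F n are meaningful). -/
def fibArr : ℕ → ℕ → ℕ → ℕ → Fin 2 × Fin 2
  | 0, 0, _, _ => (0, 0)
  | 0, 1, _, _ => (0, 1)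
  | 1, 0, _, _ => (1, 0)
  | 1, 1, _, _ => (1, 1)
  | 0, n + 2, i, j =>
      if j < F (n + 1) then fibArr 0 (n + 1) i j else fibArr 0 n i (j - F (n + 1))
  | 1, n + 2, i, j =>
      if j < F (n + 1) then fibArr 1 (n + 1) i j else fibArr 1 n i (j - F (n + 1))
  | m + 2, k, i, j =>
      if i < F (m + 1) then fibArr (m + 1) k i j else fibArr m k (i - F (m + 1)) j
  termination_by m n => (m, n)

/-- The r × l subarray of u with top-left entry at (i,j). -/
def subarr (u : ℕ → ℕ → Fin 2 × Fin 2) (i j r l : ℕ) : Fin r × Fin l → Fin 2 × Fin 2 :=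
  fun p => u (i + p.1.val) (j + p.2.val)

/-- Number of square occurrences in a finite word. -/
noncomputable def sqOcc (w : List (Fin 2)) : ℕ :=
  {p : ℕ × ℕ | 1 ≤ p.2 ∧ p.1 + 2 * p.2 ≤ w.length ∧
    ∀ t < p.2, w.getD (p.1 + t) 0 = w.getD (p.1 + p.2 + t) 0}.ncard

/-- R(n): number of square occurrences in f_n. -/
noncomputable def R (n : ℕ) : ℕ := sqOcc (fibWord n)


lemma fibWord_length (n : ℕ) : (fibWord n).length = F n := by
  induction n using Nat.strong_induction_on with
  | _ n ih =>
    match n with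
    | 0 => rfl
    | 1 => rfl
    | n + 2 =>
      simp [fibWord, F, ih (n+1) (by omega), ih n (by omega)]

lemma getD_fibWord_add (n j : ℕ) :
    (fibWord (n+2)).getD j 0 =
      if j < F (n + 1) then (fibWord (n+1)).getD j 0 else (fibWord n).getD (j - F (n+1)) 0 := by
  rw [show fibWord (n+2) = fibWord (n+1) ++ fibWord n from rfl]
  by_cases h : j < F (n+1)
  · rw [if_pos h, List.getD_append _ _ _ _ (by rw [fibWord_length]; exact h)]
  · rw [if_neg h, List.getD_append_right _ _ _ _ (by rw [fibWord_length]; omega), fibWord_length]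

lemma fibArr_eq : ∀ m n i j, i < F m → j < F n →
    fibArr m n i j = ((fibWord m).getD i 0, (fibWord n).getD j 0) := by
  intro m
  induction m using Nat.strong_induction_on with
  | _ m ihm =>
    match m with
    | 0 =>
      intro n
      induction n using Nat.strong_induction_on with
      | _ n ihn =>
        match n with
        | 0 =>
          intro i j hi hj
          simp only [F] at hi hj
          obtain rfl : i = 0 := by omega
          obtain rfl : j = 0 := by omega
          rw [fibArr]; rfl
        | 1 =>
          intro i j hi hj
          simp only [F] at hi hj
          obtain rfl : i = 0 := by omega
          obtain rfl : j = 0 := by omega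
          rw [fibArr]; rfl
        | n + 2 =>
          intro i j hi hj
          rw [fibArr, getD_fibWord_add n j]
          by_cases h : j < F (n+1)
          · rw [if_pos h, if_pos h, ihn (n+1) (by omega) i j hi h]
          · rw [if_neg h, if_neg h, ihn n (by omega) i _ hi (by simp [F] at hj; omega)]
    | 1 =>
      intro n
      induction n using Nat.strong_induction_on with
      | _ n ihn =>
        match n with
        | 0 =>
          intro i j hi hj
          simp only [F] at hi hj
          obtain rfl : i = 0 := by omega
          obtain rfl : j = 0 := by omega
          rw [fibArr]; rfl
        | 1 =>
          intro i j hi hj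
          simp only [F] at hi hj
          obtain rfl : i = 0 := by omega
          obtain rfl : j = 0 := by omega
          rw [fibArr]; rfl
        | n + 2 =>
          intro i j hi hj
          rw [fibArr, getD_fibWord_add n j]
          by_cases h : j < F (n+1)
          · rw [if_pos h, if_pos h, ihn (n+1) (by omega) i j hi h]
          · rw [if_neg h, if_neg h, ihn n (by omega) i _ hi (by simp [F] at hj; omega)]
    | m + 2 =>
      intro n i j hi hj
      rw [fibArr, getD_fibWord_add m i]
      by_cases h : i < F (m+1)
      · rw [if_pos h, if_pos h, ihm (m+1) (by omega) n i j h hj]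
      · rw [if_neg h, if_neg h, ihm m (by omega) n _ j (by simp [F] at hi; omega) hj]

def eSplit : (ℕ × ℕ × ℕ × ℕ) ≃ (ℕ × ℕ) × (ℕ × ℕ) where
  toFun t := ((t.1, t.2.2.1), (t.2.1, t.2.2.2))
  invFun p := (p.1.1, p.2.1, p.1.2, p.2.2)
  left_inv := by rintro ⟨a, b, c, d⟩; rfl
  right_inv := by rintro ⟨⟨a, b⟩, ⟨c, d⟩⟩; rfl

lemma subarr_iff (m n i j r l : ℕ) (hr : 1 ≤ r) (hir : i + r ≤ F m) (hjl : j + 2 * l ≤ F n) :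
    subarr (fibArr m n) i j r l = subarr (fibArr m n) i (j + l) r l ↔
      ∀ t < l, (fibWord n).getD (j + t) 0 = (fibWord n).getD (j + l + t) 0 := by
  constructor
  · intro h t ht
    have h2 := congrFun h (⟨0, hr⟩, ⟨t, ht⟩)
    simp only [subarr] at h2
    rw [fibArr_eq m n _ _ (by omega) (by omega),
        fibArr_eq m n _ _ (by omega) (by omega)] at h2
    have h3 := congrArg Prod.snd h2
    simp only at h3
    rw [h3]
  · intro h
    funext p
    obtain ⟨⟨a, ha⟩, ⟨b, hb⟩⟩ := p
    simp only [subarr]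
    rw [fibArr_eq m n _ _ (by omega) (by omega),
        fibArr_eq m n _ _ (by omega) (by omega)]
    have h2 := h b hb
    rw [Prod.mk.injEq]
    exact ⟨rfl, h2⟩

/-- For m ≥ 1 and n ≥ 3, the number of Type I(a) tandem occurrences in the
Fibonacci array f_{m,n} — tuples (i,j,r,l) with r,l ≥ 1, i+r ≤ F(m), j+2l ≤ F(n) such that
f_{m,n}[(i,j);(r,l)] = f_{m,n}[(i,j+l);(r,l)] — equals R(n)·F(m)(F(m)+1)/2. -/
theorem stmt2 (m n : ℕ) (hm : 1 ≤ m) (hn : 3 ≤ n) :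
    {t : ℕ × ℕ × ℕ × ℕ | 1 ≤ t.2.2.1 ∧ 1 ≤ t.2.2.2 ∧
      t.1 + t.2.2.1 ≤ F m ∧ t.2.1 + 2 * t.2.2.2 ≤ F n ∧
      subarr (fibArr m n) t.1 t.2.1 t.2.2.1 t.2.2.2
        = subarr (fibArr m n) t.1 (t.2.1 + t.2.2.2) t.2.2.1 t.2.2.2}.ncard
      = R n * (F m * (F m + 1) / 2) := by
  set A : Set (ℕ × ℕ) := {p | 1 ≤ p.2 ∧ p.1 + p.2 ≤ F m} with hA
  set B : Set (ℕ × ℕ) := {p | 1 ≤ p.2 ∧ p.1 + 2 * p.2 ≤ F n ∧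
    ∀ t < p.2, (fibWord n).getD (p.1 + t) 0 = (fibWord n).getD (p.1 + p.2 + t) 0} with hBdef
  -- the main set is the preimage of A ×ˢ B under eSplit
  have hS : {t : ℕ × ℕ × ℕ × ℕ | 1 ≤ t.2.2.1 ∧ 1 ≤ t.2.2.2 ∧
      t.1 + t.2.2.1 ≤ F m ∧ t.2.1 + 2 * t.2.2.2 ≤ F n ∧
      subarr (fibArr m n) t.1 t.2.1 t.2.2.1 t.2.2.2
        = subarr (fibArr m n) t.1 (t.2.1 + t.2.2.2) t.2.2.1 t.2.2.2}
      = eSplit ⁻¹' (A ×ˢ B) := by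
    ext ⟨i, j, r, l⟩
    simp only [Set.mem_setOf_eq, Set.mem_preimage, Set.mem_prod, eSplit, Equiv.coe_fn_mk, hA,
      hBdef]
    constructor
    · rintro ⟨hr, hl, hir, hjl, heq⟩
      exact ⟨⟨hr, hir⟩, hl, hjl, (subarr_iff m n i j r l hr hir hjl).mp heq⟩
    · rintro ⟨⟨hr, hir⟩, hl, hjl, hsq⟩
      exact ⟨hr, hl, hir, hjl, (subarr_iff m n i j r l hr hir hjl).mpr hsq⟩
  rw [hS, ← Equiv.image_symm_eq_preimage, Set.ncard_image_of_injective _ eSplit.symm.injective]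
  -- A as a finset
  set TA : Finset (ℕ × ℕ) :=
    (Finset.range (F m + 1)).biUnion (fun k => (Finset.range k).image (fun i => (i, k - i)))
    with hTA
  have hAT : A = ↑TA := by
    ext ⟨i, r⟩
    simp only [hA, Set.mem_setOf_eq, hTA, Finset.coe_biUnion, Finset.mem_coe,
      Finset.mem_biUnion, Finset.mem_range, Finset.mem_image, Set.mem_iUnion, Prod.mk.injEq]
    constructor
    · rintro ⟨hr, hir⟩
      exact ⟨i + r, by omega, ⟨i, by omega, rfl, by omega⟩⟩
    · rintro ⟨k, hk, a, ha, rfl, rfl⟩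
      omega
  have hTAcard : TA.card = F m * (F m + 1) / 2 := by
    rw [hTA, Finset.card_biUnion]
    · have : ∀ k ∈ Finset.range (F m + 1),
          ((Finset.range k).image (fun i => (i, k - i))).card = k := by
        intro k _
        rw [Finset.card_image_of_injOn, Finset.card_range]
        intro a _ b _ hab
        exact (Prod.mk.injEq _ _ _ _).mp hab |>.1
      rw [Finset.sum_congr rfl this, Finset.sum_range_id, Nat.add_sub_cancel, Nat.mul_comm]
    · intro x _ y _ hxy
      simp only [Finset.disjoint_left, Finset.mem_image, Finset.mem_range]
      rintro ⟨a, b⟩ ⟨a1, ha1, h1⟩ ⟨a2, ha2, h2⟩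
      rw [Prod.mk.injEq] at h1 h2
      omega
  -- B is finite
  have hBfin : B.Finite := by
    apply Set.Finite.subset (Finset.finite_toSet (Finset.range (F n + 1) ×ˢ Finset.range (F n + 1)))
    rintro ⟨j, l⟩ ⟨hl, hjl, -⟩
    simp only [Finset.coe_product, Set.mem_prod, Finset.mem_coe, Finset.mem_range]
    omega
  have hBR : B.ncard = R n := by
    rw [R, sqOcc, fibWord_length]
  have hprod : A ×ˢ B = ↑(TA ×ˢ hBfin.toFinset) := by
    rw [hAT, Finset.coe_product, hBfin.coe_toFinset]
  rw [hprod, Set.ncard_coe_finset, Finset.card_product, hTAcard,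
    show hBfin.toFinset.card = R n by rw [← hBR, Set.ncard_eq_toFinset_card _ hBfin]]
  ring
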